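/- arXiv:1912.04253 — 3 statements merged into one kernel-verified Lean document; each statement's English description precedes it below -/
import Mathlib

section
/- The Baer-type action of extensions on variegated extensions is well defined: the morphisms a⁺ : F ⟶ W + 𝐗 and b⁺ : W + 𝐗 ⟶ E exist as described (i.e., (a, 0) : F ⟶ W ⊕ X factors through the pullback V, and b composed with the first projection V ⟶ W descends to the cokernel W + 𝐗), and the triple (W + 𝐗, a⁺, b⁺) is a variegated extension of 𝐄 by 𝐅. -/
open CategoryTheory Category Limits

universe w v u

/-- The ambient data: an abelian category `C` together with two short exact sequences
`𝐅 : 0 → P →[ι] F →[π] R → 0` and `𝐄 : 0 → R →[κ] E →[ρ] Q → 0`. -/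
structure VarSetup (C : Type u) [Category.{v} C] [Abelian C] where
  P : C
  R : C
  Q : C
  F : C
  E : C
  ι : P ⟶ F
  π : F ⟶ R
  κ : R ⟶ E
  ρ : E ⟶ Q
  wF : ι ≫ π = 0
  seF : (ShortComplex.mk ι π wF).ShortExact
  wE : κ ≫ ρ = 0
  seE : (ShortComplex.mk κ ρ wE).ShortExact

variable {C : Type u} [Category.{v} C] [Abelian C]

/-- `(W, a, b)` is a variegated extension of `𝐄` by `𝐅`: (i) `b ∘ a = κ ∘ π`,
(ii) `0 → P →[a∘ι] W →[b] E → 0` is short exact, and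
(iii) `0 → F →[a] W →[ρ∘b] Q → 0` is short exact. -/
structure IsVarExt (S : VarSetup C) {W : C} (a : S.F ⟶ W) (b : W ⟶ S.E) : Prop where
  comm : a ≫ b = S.π ≫ S.κ
  w1 : (S.ι ≫ a) ≫ b = 0
  se1 : (ShortComplex.mk (S.ι ≫ a) b w1).ShortExact
  w2 : a ≫ (b ≫ S.ρ) = 0
  se2 : (ShortComplex.mk a (b ≫ S.ρ) w2).ShortExact

/-- A variegated extension of `𝐄` by `𝐅`, bundled. -/
structure VarExt (S : VarSetup C) where
  W : C
  a : S.F ⟶ W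
  b : W ⟶ S.E
  isVarExt : IsVarExt S a b

/-- An extension of `Q` by `P`: a short exact sequence `0 → P →[α] X →[β] Q → 0`. -/
structure Extension (P Q : C) where
  X : C
  α : P ⟶ X
  β : X ⟶ Q
  w : α ≫ β = 0
  se : (ShortComplex.mk α β w).ShortExact

section Plus

variable (S : VarSetup C) {W : C} (a : S.F ⟶ W) (b : W ⟶ S.E)
  (h1 : (S.ι ≫ a) ≫ b = 0) (h2 : a ≫ (b ≫ S.ρ) = 0)
  {X : C} (α : S.P ⟶ X) (β : X ⟶ S.Q) (hw : α ≫ β = 0)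

/-- The morphism `P ⟶ V` into the pullback `V` of `(ρ∘b) ⊕ β : W ⊕ X ⟶ Q ⊕ Q`
along the diagonal `Q ⟶ Q ⊕ Q` (i.e. the fibre product of `ρ∘b` and `β` over `Q`),
with components `a∘ι : P ⟶ W` and `−α : P ⟶ X`. -/
noncomputable def plusKer : S.P ⟶ pullback (b ≫ S.ρ) β :=
  pullback.lift (S.ι ≫ a) (-α)
    (by rw [Category.assoc, h2, comp_zero, Preadditive.neg_comp, hw, neg_zero])

/-- `W + 𝐗`, the cokernel of `plusKer : P ⟶ V`. -/
noncomputable def plusW : C := cokernel (plusKer S a b h2 α β hw)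

/-- `a⁺ : F ⟶ W + 𝐗`, induced by `(a, 0) : F ⟶ V`. -/
noncomputable def plusA : S.F ⟶ plusW S a b h2 α β hw :=
  pullback.lift a 0 (by rw [h2, zero_comp]) ≫ cokernel.π _

/-- `b⁺ : W + 𝐗 ⟶ E`, induced by `b` composed with the first projection `V ⟶ W`. -/
noncomputable def plusB : plusW S a b h2 α β hw ⟶ S.E :=
  cokernel.desc _ (pullback.fst (b ≫ S.ρ) β ≫ b) (by
    rw [← Category.assoc,
      show plusKer S a b h2 α β hw ≫ pullback.fst (b ≫ S.ρ) β = S.ι ≫ a from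
        pullback.lift_fst _ _ _, h1])

end Plus

section Helpers

open CategoryTheory.Abelian

attribute [local instance] CategoryTheory.Abelian.Pseudoelement.objectToSort
  CategoryTheory.Abelian.Pseudoelement.homToFun

open CategoryTheory.Abelian.Pseudoelement in
/-- A pseudoelement of a pullback both of whose projections vanish is zero. -/
private lemma pb_pseudo_zero {A B T : C} {f : A ⟶ T} {g : B ⟶ T} (v : (pullback f g : C))
    (h1 : pullback.fst f g v = 0) (h2 : pullback.snd f g v = 0) : v = 0 := by
  let μ : kernel g ⟶ pullback f g := pullback.lift 0 (kernel.ι g) (by simp)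
  have hμsnd : μ ≫ pullback.snd f g = kernel.ι g := pullback.lift_snd _ _ _
  have hμfst : μ ≫ pullback.fst f g = 0 := pullback.lift_fst _ _ _
  haveI : Mono μ := mono_of_mono_fac hμsnd
  have hlim : IsLimit (KernelFork.ofι μ hμfst) :=
    KernelFork.IsLimit.ofι' μ hμfst (fun {A'} k hk =>
      ⟨kernel.lift g (k ≫ pullback.snd f g) (by
          rw [Category.assoc, ← pullback.condition, ← Category.assoc, hk, zero_comp]), by
        apply pullback.hom_ext
        · rw [Category.assoc, hμfst, comp_zero, hk]
        · rw [Category.assoc, hμsnd, kernel.lift_ι]⟩)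
  have hex : (ShortComplex.mk μ (pullback.fst f g) hμfst).Exact :=
    (ShortComplex.mk μ (pullback.fst f g) hμfst).exact_of_f_is_kernel hlim
  obtain ⟨x, hx⟩ := pseudo_exact_of_exact hex v h1
  have hx' : (μ : kernel g ⟶ pullback f g) x = v := hx
  have hker : kernel.ι g x = 0 := by
    have := congrArg (pullback.snd f g) hx'
    rw [← Pseudoelement.comp_apply, hμsnd] at this
    rw [this, h2]
  have hx0 : x = 0 := zero_of_map_zero _ (pseudo_injective_of_mono (kernel.ι g)) _ hker
  rw [← hx', hx0, apply_zero]

open CategoryTheory.Abelian.Pseudoelement in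
/-- A pseudoelement killed by the cokernel projection lies in the image. -/
private lemma exists_of_cokernel_pseudo_zero {A B : C} {f : A ⟶ B} (t : B)
    (h : cokernel.π f t = 0) : ∃ s : A, f s = t :=
  pseudo_exact_of_exact
    ((ShortComplex.mk f (cokernel.π f) (cokernel.condition f)).exact_of_g_is_cokernel
      (cokernelIsCokernel f)) t h

end Helpers


section Aux

open CategoryTheory.Abelian

attribute [local instance] CategoryTheory.Abelian.Pseudoelement.objectToSort
  CategoryTheory.Abelian.Pseudoelement.homToFun

variable {S : VarSetup C} {W : C} {a : S.F ⟶ W} {b : W ⟶ S.E}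
  {X : C} {α : S.P ⟶ X} {β : X ⟶ S.Q}

private lemma wI (h2 : a ≫ (b ≫ S.ρ) = 0) :
    (S.ι ≫ a) ≫ (b ≫ S.ρ) = (0 : S.P ⟶ X) ≫ β := by
  rw [Category.assoc, h2, comp_zero, zero_comp]

private lemma wZ (hw : α ≫ β = 0) : (0 : S.P ⟶ W) ≫ (b ≫ S.ρ) = α ≫ β := by
  rw [hw, zero_comp]

private lemma wA (h2 : a ≫ (b ≫ S.ρ) = 0) : a ≫ (b ≫ S.ρ) = (0 : S.F ⟶ X) ≫ β := by
  rw [h2, zero_comp]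

variable (h2 : a ≫ (b ≫ S.ρ) = 0) (hw : α ≫ β = 0)

private lemma lift_eq_add :
    pullback.lift (S.ι ≫ a) (0 : S.P ⟶ X) (wI h2) =
      pullback.lift 0 α (wZ hw) + plusKer S a b h2 α β hw := by
  apply pullback.hom_ext
  · rw [Preadditive.add_comp]; simp only [plusKer]
    rw [pullback.lift_fst, pullback.lift_fst, pullback.lift_fst, zero_add]
  · rw [Preadditive.add_comp]; simp only [plusKer]
    rw [pullback.lift_snd, pullback.lift_snd, pullback.lift_snd, add_neg_cancel]

private lemma lift_comp_c :
    pullback.lift (S.ι ≫ a) (0 : S.P ⟶ X) (wI h2) ≫ cokernel.π (plusKer S a b h2 α β hw) =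
      pullback.lift 0 α (wZ hw) ≫ cokernel.π (plusKer S a b h2 α β hw) := by
  rw [lift_eq_add h2 hw, Preadditive.add_comp, cokernel.condition, add_zero]

private lemma iota_lift :
    S.ι ≫ (pullback.lift a (0 : S.F ⟶ X) (wA h2) : S.F ⟶ pullback (b ≫ S.ρ) β) =
      pullback.lift (S.ι ≫ a) 0 (wI h2) := by
  apply pullback.hom_ext
  · rw [Category.assoc, pullback.lift_fst, pullback.lift_fst]
  · rw [Category.assoc, pullback.lift_snd, pullback.lift_snd, comp_zero]

private lemma liftA_c : pullback.lift a (0 : S.F ⟶ X) (wA h2) ≫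
    cokernel.π (plusKer S a b h2 α β hw) = plusA S a b h2 α β hw := rfl

private lemma iota_plusA :
    S.ι ≫ plusA S a b h2 α β hw =
      pullback.lift 0 α (wZ hw) ≫ cokernel.π (plusKer S a b h2 α β hw) := by
  delta plusA plusW; rw [← Category.assoc, iota_lift h2, lift_comp_c h2 hw]

private lemma c_plusB (h1 : (S.ι ≫ a) ≫ b = 0) :
    cokernel.π (plusKer S a b h2 α β hw) ≫ plusB S a b h1 h2 α β hw =
      pullback.fst (b ≫ S.ρ) β ≫ b := by
  simp only [plusB, cokernel.π_desc]

/-- `φ₁ : P ⊞ P ⟶ V`, with components `(0, α)` and `plusKer`. -/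
private noncomputable def phi1 : S.P ⊞ S.P ⟶ pullback (b ≫ S.ρ) β :=
  biprod.desc (pullback.lift 0 α (wZ hw)) (plusKer S a b h2 α β hw)

private lemma lift0_phi1 :
    pullback.lift (0 : S.P ⟶ W) α (wZ hw) ≫ cokernel.π (phi1 h2 hw) = 0 := by
  have h : biprod.inl ≫ phi1 h2 hw = pullback.lift (0 : S.P ⟶ W) α (wZ hw) := by
    simp [phi1]
  rw [← h, Category.assoc, cokernel.condition, comp_zero]

private lemma ker_phi1 : plusKer S a b h2 α β hw ≫ cokernel.π (phi1 h2 hw) = 0 := by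
  have h : biprod.inr ≫ phi1 h2 hw = plusKer S a b h2 α β hw := by simp [phi1]
  rw [← h, Category.assoc, cokernel.condition, comp_zero]

private lemma liftI_phi1 :
    pullback.lift (S.ι ≫ a) (0 : S.P ⟶ X) (wI h2) ≫ cokernel.π (phi1 h2 hw) = 0 := by
  rw [lift_eq_add h2 hw, Preadditive.add_comp, lift0_phi1 h2 hw, ker_phi1 h2 hw, add_zero]

private lemma phi1_c :
    phi1 h2 hw ≫ cokernel.π (plusKer S a b h2 α β hw) =
      biprod.fst ≫ (S.ι ≫ plusA S a b h2 α β hw) := by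
  rw [iota_plusA h2 hw]
  delta plusW
  apply biprod.hom_ext' <;> simp [phi1, cokernel.condition]

/-- `φ₂ : F ⊞ P ⟶ V`, with components `(a, 0)` and `plusKer`. -/
private noncomputable def phi2 : S.F ⊞ S.P ⟶ pullback (b ≫ S.ρ) β :=
  biprod.desc (pullback.lift a 0 (wA h2)) (plusKer S a b h2 α β hw)

private lemma liftA_phi2 :
    pullback.lift a (0 : S.F ⟶ X) (wA h2) ≫ cokernel.π (phi2 h2 hw) = 0 := by
  have h : biprod.inl ≫ phi2 h2 hw = pullback.lift a 0 (wA h2) := by simp [phi2]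
  rw [← h, Category.assoc, cokernel.condition, comp_zero]

private lemma ker_phi2 : plusKer S a b h2 α β hw ≫ cokernel.π (phi2 h2 hw) = 0 := by
  have h : biprod.inr ≫ phi2 h2 hw = plusKer S a b h2 α β hw := by simp [phi2]
  rw [← h, Category.assoc, cokernel.condition, comp_zero]

private lemma lift0_phi2 :
    pullback.lift (0 : S.P ⟶ W) α (wZ hw) ≫ cokernel.π (phi2 h2 hw) = 0 := by
  have h : pullback.lift (0 : S.P ⟶ W) α (wZ hw) =
      pullback.lift (S.ι ≫ a) 0 (wI h2) - plusKer S a b h2 α β hw := by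
    rw [lift_eq_add h2 hw]; abel
  rw [h, Preadditive.sub_comp, ker_phi2 h2 hw, sub_zero, ← iota_lift h2, Category.assoc,
    liftA_phi2 h2 hw, comp_zero]

private lemma phi2_c :
    phi2 h2 hw ≫ cokernel.π (plusKer S a b h2 α β hw) =
      biprod.fst ≫ plusA S a b h2 α β hw := by
  rw [← liftA_c h2 hw]
  delta plusW
  apply biprod.hom_ext' <;> simp [phi2, cokernel.condition]

end Aux

section Main

open CategoryTheory.Abelian

attribute [local instance] CategoryTheory.Abelian.Pseudoelement.objectToSort
  CategoryTheory.Abelian.Pseudoelement.homToFun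

/-- The Baer-type action of extensions on variegated extensions is well defined:
the morphisms `a⁺` and `b⁺` exist as described (witnessed by the definitions above,
with `plusKer` a monomorphism), and `(W + 𝐗, a⁺, b⁺)` is a variegated extension of
`𝐄` by `𝐅`. -/
theorem baer_action_well_defined (S : VarSetup C) (V : VarExt S) (X : Extension S.P S.Q) :
    Mono (plusKer S V.a V.b V.isVarExt.w2 X.α X.β X.w) ∧
    IsVarExt S (plusA S V.a V.b V.isVarExt.w2 X.α X.β X.w)
      (plusB S V.a V.b V.isVarExt.w1 V.isVarExt.w2 X.α X.β X.w) := by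
  obtain ⟨W, a, b, hV⟩ := V
  obtain ⟨X, α, β, hw, hse⟩ := X
  dsimp only at *
  -- basic mono/epi instances from the hypotheses
  haveI hmι : Mono S.ι := S.seF.mono_f
  haveI hmρ : Epi S.ρ := S.seE.epi_g
  haveI hmιa : Mono (S.ι ≫ a) := hV.se1.mono_f
  haveI hea : Mono a := hV.se2.mono_f
  haveI heb : Epi b := hV.se1.epi_g
  haveI hmα : Mono α := hse.mono_f
  haveI heβ : Epi β := hse.epi_g
  -- `plusKer` is a monomorphism
  have hKfst : plusKer S a b hV.w2 α β hw ≫ pullback.fst (b ≫ S.ρ) β = S.ι ≫ a := by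
    exact pullback.lift_fst _ _ _
  have monoK : Mono (plusKer S a b hV.w2 α β hw) := mono_of_mono_fac hKfst
  refine ⟨monoK, ?_⟩
  -- commutativity
  have hcB := c_plusB hV.w2 hw hV.w1
  have hcomm : plusA S a b hV.w2 α β hw ≫ plusB S a b hV.w1 hV.w2 α β hw = S.π ≫ S.κ := by
    simp only [plusA, Category.assoc]
    erw [Category.assoc, hcB]; rw [ pullback.lift_fst_assoc, hV.comm]
  -- `a⁺` is a monomorphism
  haveI monoNegα : Mono (-α) := by
    haveI : IsIso (-𝟙 X) := ⟨-𝟙 X, by simp, by simp⟩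
    have h : -α = α ≫ (-𝟙 X) := by simp
    rw [h]; infer_instance
  haveI monoA : Mono (plusA S a b hV.w2 α β hw) := by
    apply Pseudoelement.mono_of_zero_of_map_zero
    intro x hx
    erw [← liftA_c hV.w2 hw, Pseudoelement.comp_apply] at hx
    obtain ⟨p, hp⟩ := exists_of_cokernel_pseudo_zero _ hx
    have hsnd := congrArg (Pseudoelement.pseudoApply (pullback.snd (b ≫ S.ρ) β)) hp
    rw [← Pseudoelement.comp_apply, ← Pseudoelement.comp_apply] at hsnd
    rw [show plusKer S a b hV.w2 α β hw ≫ pullback.snd (b ≫ S.ρ) β = -α by exact pullback.lift_snd _ _ _,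
      pullback.lift_snd, Pseudoelement.zero_apply] at hsnd
    have hp0 : p = 0 :=
      Pseudoelement.zero_of_map_zero _ (Pseudoelement.pseudo_injective_of_mono (-α)) _ hsnd
    rw [hp0, Pseudoelement.apply_zero] at hp
    have hfst := congrArg (Pseudoelement.pseudoApply (pullback.fst (b ≫ S.ρ) β)) hp
    rw [← Pseudoelement.comp_apply, pullback.lift_fst, Pseudoelement.apply_zero] at hfst
    exact Pseudoelement.zero_of_map_zero _ (Pseudoelement.pseudo_injective_of_mono a) _ hfst.symm
  -- `b⁺` is an epimorphism
  haveI epiB : Epi (plusB S a b hV.w1 hV.w2 α β hw) := by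
    haveI : Epi (cokernel.π (plusKer S a b hV.w2 α β hw) ≫ plusB S a b hV.w1 hV.w2 α β hw) := by
      rw [hcB]; exact epi_comp _ _
    exact epi_of_epi (cokernel.π _) _
  refine ⟨hcomm, ?_, ?_, ?_, ?_⟩
  · -- w1
    rw [Category.assoc, hcomm, ← Category.assoc, S.wF, zero_comp]
  · -- se1
    refine { exact := ?_, mono_f := ?_, epi_g := ?_ }
    · -- exactness at `W + 𝐗` for `(ι ≫ a⁺, b⁺)`
      apply Pseudoelement.exact_of_pseudo_exact
      intro t ht
      obtain ⟨v, hv⟩ :=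
        Pseudoelement.pseudo_surjective_of_epi (cokernel.π (plusKer S a b hV.w2 α β hw)) t
      have h1' : Pseudoelement.pseudoApply b
          (Pseudoelement.pseudoApply (pullback.fst (b ≫ S.ρ) β) v) = 0 := by
        erw [← Pseudoelement.comp_apply, ← hcB, Pseudoelement.comp_apply, hv]
        exact ht
      obtain ⟨p, hp⟩ := Pseudoelement.pseudo_exact_of_exact hV.se1.exact _ h1'
      have hp' : Pseudoelement.pseudoApply (S.ι ≫ a) p =
          Pseudoelement.pseudoApply (pullback.fst (b ≫ S.ρ) β) v := hp
      have hfst : Pseudoelement.pseudoApply (pullback.fst (b ≫ S.ρ) β) v =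
          Pseudoelement.pseudoApply (pullback.fst (b ≫ S.ρ) β)
            (Pseudoelement.pseudoApply (pullback.lift (S.ι ≫ a) 0 (wI hV.w2)) p) := by
        rw [← Pseudoelement.comp_apply, pullback.lift_fst]
        exact hp'.symm
      obtain ⟨z, hz0, hzp⟩ := Pseudoelement.sub_of_eq_image _ _ _ hfst
      have hq'vz : Pseudoelement.pseudoApply (cokernel.π (phi1 hV.w2 hw)) z =
          Pseudoelement.pseudoApply (cokernel.π (phi1 hV.w2 hw)) v := by
        apply hzp
        rw [← Pseudoelement.comp_apply, liftI_phi1 hV.w2 hw, Pseudoelement.zero_apply]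
      have hβz : Pseudoelement.pseudoApply β
          (Pseudoelement.pseudoApply (pullback.snd (b ≫ S.ρ) β) z) = 0 := by
        rw [← Pseudoelement.comp_apply, ← pullback.condition, Pseudoelement.comp_apply, hz0,
          Pseudoelement.apply_zero]
      obtain ⟨p2, hp2⟩ := Pseudoelement.pseudo_exact_of_exact hse.exact _ hβz
      have hp2' : Pseudoelement.pseudoApply α p2 =
          Pseudoelement.pseudoApply (pullback.snd (b ≫ S.ρ) β) z := hp2
      have hsnd : Pseudoelement.pseudoApply (pullback.snd (b ≫ S.ρ) β) z =
          Pseudoelement.pseudoApply (pullback.snd (b ≫ S.ρ) β)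
            (Pseudoelement.pseudoApply (pullback.lift 0 α (wZ hw)) p2) := by
        rw [← Pseudoelement.comp_apply, pullback.lift_snd]
        exact hp2'.symm
      obtain ⟨z2, hz20, hz2p⟩ := Pseudoelement.sub_of_eq_image _ _ _ hsnd
      have hz2fst : Pseudoelement.pseudoApply (pullback.fst (b ≫ S.ρ) β) z2 = 0 := by
        have h := hz2p _ (pullback.fst (b ≫ S.ρ) β) (by
          rw [← Pseudoelement.comp_apply, pullback.lift_fst, Pseudoelement.zero_apply])
        rw [h, hz0]
      have hz2zero : z2 = 0 := pb_pseudo_zero z2 hz2fst hz20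
      have hq'z : Pseudoelement.pseudoApply (cokernel.π (phi1 hV.w2 hw)) z = 0 := by
        have h := hz2p _ (cokernel.π (phi1 hV.w2 hw)) (by
          rw [← Pseudoelement.comp_apply, lift0_phi1 hV.w2 hw, Pseudoelement.zero_apply])
        rw [← h, hz2zero, Pseudoelement.apply_zero]
      obtain ⟨s, hs⟩ := exists_of_cokernel_pseudo_zero v (by rw [← hq'vz, hq'z])
      refine ⟨Pseudoelement.pseudoApply biprod.fst s, ?_⟩
      erw [← Pseudoelement.comp_apply, ← phi1_c hV.w2 hw, Pseudoelement.comp_apply, hs]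
      exact hv
    · exact mono_comp _ _
    · exact epiB
  · -- w2
    rw [← Category.assoc, hcomm, Category.assoc, S.wE, comp_zero]
  · -- se2
    haveI : Epi (plusB S a b hV.w1 hV.w2 α β hw ≫ S.ρ) := epi_comp _ _
    refine { exact := ?_, mono_f := ?_, epi_g := ?_ }
    · -- exactness at `W + 𝐗` for `(a⁺, b⁺ ≫ ρ)`
      apply Pseudoelement.exact_of_pseudo_exact
      intro t ht
      obtain ⟨v, hv⟩ :=
        Pseudoelement.pseudo_surjective_of_epi (cokernel.π (plusKer S a b hV.w2 α β hw)) t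
      have hcomp : cokernel.π (plusKer S a b hV.w2 α β hw) ≫
          (plusB S a b hV.w1 hV.w2 α β hw ≫ S.ρ) = pullback.fst (b ≫ S.ρ) β ≫ (b ≫ S.ρ) := by
        erw [← Category.assoc, hcB, Category.assoc]
      have h1' : Pseudoelement.pseudoApply (b ≫ S.ρ)
          (Pseudoelement.pseudoApply (pullback.fst (b ≫ S.ρ) β) v) = 0 := by
        rw [← Pseudoelement.comp_apply, ← hcomp, Pseudoelement.comp_apply, hv]
        exact ht
      have hβv : Pseudoelement.pseudoApply β
          (Pseudoelement.pseudoApply (pullback.snd (b ≫ S.ρ) β) v) = 0 := by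
        rw [← Pseudoelement.comp_apply, ← pullback.condition, Pseudoelement.comp_apply]
        exact h1'
      obtain ⟨p, hp⟩ := Pseudoelement.pseudo_exact_of_exact hse.exact _ hβv
      have hp' : Pseudoelement.pseudoApply α p =
          Pseudoelement.pseudoApply (pullback.snd (b ≫ S.ρ) β) v := hp
      have hsnd : Pseudoelement.pseudoApply (pullback.snd (b ≫ S.ρ) β) v =
          Pseudoelement.pseudoApply (pullback.snd (b ≫ S.ρ) β)
            (Pseudoelement.pseudoApply (pullback.lift 0 α (wZ hw)) p) := by
        rw [← Pseudoelement.comp_apply, pullback.lift_snd]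
        exact hp'.symm
      obtain ⟨z, hz0, hzp⟩ := Pseudoelement.sub_of_eq_image _ _ _ hsnd
      have hqvz : Pseudoelement.pseudoApply (cokernel.π (phi2 hV.w2 hw)) z =
          Pseudoelement.pseudoApply (cokernel.π (phi2 hV.w2 hw)) v := by
        apply hzp
        rw [← Pseudoelement.comp_apply, lift0_phi2 hV.w2 hw, Pseudoelement.zero_apply]
      have hbρz : Pseudoelement.pseudoApply (b ≫ S.ρ)
          (Pseudoelement.pseudoApply (pullback.fst (b ≫ S.ρ) β) z) = 0 := by
        rw [← Pseudoelement.comp_apply, pullback.condition, Pseudoelement.comp_apply, hz0,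
          Pseudoelement.apply_zero]
      obtain ⟨f, hf⟩ := Pseudoelement.pseudo_exact_of_exact hV.se2.exact _ hbρz
      have hf' : Pseudoelement.pseudoApply a f =
          Pseudoelement.pseudoApply (pullback.fst (b ≫ S.ρ) β) z := hf
      have hfst : Pseudoelement.pseudoApply (pullback.fst (b ≫ S.ρ) β) z =
          Pseudoelement.pseudoApply (pullback.fst (b ≫ S.ρ) β)
            (Pseudoelement.pseudoApply (pullback.lift a 0 (wA hV.w2)) f) := by
        rw [← Pseudoelement.comp_apply, pullback.lift_fst]
        exact hf'.symm
      obtain ⟨z2, hz20, hz2p⟩ := Pseudoelement.sub_of_eq_image _ _ _ hfst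
      have hz2snd : Pseudoelement.pseudoApply (pullback.snd (b ≫ S.ρ) β) z2 = 0 := by
        have h := hz2p _ (pullback.snd (b ≫ S.ρ) β) (by
          rw [← Pseudoelement.comp_apply, pullback.lift_snd, Pseudoelement.zero_apply])
        rw [h, hz0]
      have hz2zero : z2 = 0 := pb_pseudo_zero z2 hz20 hz2snd
      have hqz : Pseudoelement.pseudoApply (cokernel.π (phi2 hV.w2 hw)) z = 0 := by
        have h := hz2p _ (cokernel.π (phi2 hV.w2 hw)) (by
          rw [← Pseudoelement.comp_apply, liftA_phi2 hV.w2 hw, Pseudoelement.zero_apply])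
        rw [← h, hz2zero, Pseudoelement.apply_zero]
      obtain ⟨s, hs⟩ := exists_of_cokernel_pseudo_zero v (by rw [← hqvz, hqz])
      refine ⟨Pseudoelement.pseudoApply biprod.fst s, ?_⟩
      erw [← Pseudoelement.comp_apply, ← phi2_c hV.w2 hw, Pseudoelement.comp_apply, hs]
      exact hv
    · exact monoA
    · infer_instance

end Main
end

section
/- The difference of two variegated extensions is a well-defined extension: the indicated morphisms P ⟶ W′ − W and W′ − W ⟶ Q exist (i.e., (a∘ι, 0) : P ⟶ W ⊕ W′ factors through the pullback V′ and its composite with the cokernel projection is a monomorphism, and ρ∘b composed with the first projection V′ ⟶ W descends to W′ − W), and the sequence 0 → P → (W′ − W) → Q → 0 is short exact, so that W′ − W is an extension of Q by P. -/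
open CategoryTheory Category Limits

universe w v u

variable {C : Type u} [Category.{v} C] [Abelian C]

section Diff

variable (S : VarSetup C) {W W' : C} (a : S.F ⟶ W) (b : W ⟶ S.E)
  (a' : S.F ⟶ W') (b' : W' ⟶ S.E)
  (hc : a ≫ b = S.π ≫ S.κ) (hc' : a' ≫ b' = S.π ≫ S.κ)
  (h1 : (S.ι ≫ a) ≫ b = 0) (h2 : a ≫ (b ≫ S.ρ) = 0)

/-- The morphism `F ⟶ V′` into the pullback `V′` of `b ⊕ b′ : W ⊕ W′ ⟶ E ⊕ E` along
the diagonal `E ⟶ E ⊕ E` (i.e. the fibre product of `b` and `b′` over `E`),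
with components `a : F ⟶ W` and `a′ : F ⟶ W′`. -/
noncomputable def diffKer : S.F ⟶ pullback b b' :=
  pullback.lift a a' (by rw [hc, hc'])

/-- `W′ − W`, the cokernel of `diffKer : F ⟶ V′`. -/
noncomputable def diffW : C := cokernel (diffKer S a b a' b' hc hc')

/-- The morphism `P ⟶ W′ − W` induced by `(a∘ι, 0) : P ⟶ V′`. -/
noncomputable def diffP : S.P ⟶ diffW S a b a' b' hc hc' :=
  pullback.lift (S.ι ≫ a) 0 (by rw [h1, zero_comp]) ≫ cokernel.π _

/-- The morphism `W′ − W ⟶ Q` induced by `ρ∘b` composed with the first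
projection `V′ ⟶ W`. -/
noncomputable def diffQ : diffW S a b a' b' hc hc' ⟶ S.Q :=
  cokernel.desc _ (pullback.fst b b' ≫ b ≫ S.ρ) (by
    rw [← Category.assoc,
      show diffKer S a b a' b' hc hc' ≫ pullback.fst b b' = a from pullback.lift_fst _ _ _,
      h2])

lemma diff_w : diffP S a b a' b' hc hc' h1 ≫ diffQ S a b a' b' hc hc' h2 = 0 := by
  dsimp only [diffP, diffQ, diffW]
  rw [Category.assoc, cokernel.π_desc, ← Category.assoc, pullback.lift_fst,
    Category.assoc]
  rw [show a ≫ b ≫ S.ρ = 0 from h2, comp_zero]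

end Diff

section DiffSE

variable (S : VarSetup C) {W W' : C} {a : S.F ⟶ W} {b : W ⟶ S.E}
  {a' : S.F ⟶ W'} {b' : W' ⟶ S.E}

lemma diff_shortExact (h : IsVarExt S a b) (h' : IsVarExt S a' b') :
    (ShortComplex.mk (diffP S a b a' b' h.comm h'.comm h.w1)
      (diffQ S a b a' b' h.comm h'.comm h.w2)
      (diff_w S a b a' b' h.comm h'.comm h.w1 h.w2)).ShortExact := by
  haveI : Mono a := h.se2.mono_f
  haveI : Mono a' := h'.se2.mono_f
  haveI : Epi b := h.se1.epi_g
  haveI : Epi b' := h'.se1.epi_g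
  haveI : Mono S.ι := S.seF.mono_f
  haveI : Epi S.π := S.seF.epi_g
  haveI : Epi S.ρ := S.seE.epi_g
  set kk : S.F ⟶ pullback b b' := diffKer S a b a' b' h.comm h'.comm with hkkdef
  have hkf : kk ≫ pullback.fst b b' = a := pullback.lift_fst _ _ _
  have hks : kk ≫ pullback.snd b b' = a' := pullback.lift_snd _ _ _
  set L : S.P ⟶ pullback b b' :=
    pullback.lift (S.ι ≫ a) 0 (by rw [h.w1, zero_comp]) with hLdef
  have hLf : L ≫ pullback.fst b b' = S.ι ≫ a := pullback.lift_fst _ _ _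
  have hLs : L ≫ pullback.snd b b' = 0 := pullback.lift_snd _ _ _
  have hdP : diffP S a b a' b' h.comm h'.comm h.w1 = L ≫ cokernel.π kk := rfl
  have hdQ : cokernel.π kk ≫ diffQ S a b a' b' h.comm h'.comm h.w2 =
      pullback.fst b b' ≫ b ≫ S.ρ := cokernel.π_desc _ _ _
  have exK : (ShortComplex.mk kk (cokernel.π kk) (cokernel.condition kk)).Exact :=
    ShortComplex.exact_of_g_is_cokernel _ (cokernelIsCokernel kk)
  -- mono
  haveI hm : Mono (diffP S a b a' b' h.comm h'.comm h.w1) := by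
    rw [Preadditive.mono_iff_cancel_zero]
    intro T t ht
    rw [hdP] at ht
    replace ht : (t ≫ L) ≫ cokernel.π kk = 0 := (assoc t L (cokernel.π kk)).trans ht
    obtain ⟨T', π₀, hπ₀, f, hf⟩ := exK.exact_up_to_refinements (t ≫ L) ht
    have hf' : f ≫ a' = 0 := by
      have e := hf =≫ pullback.snd b b'
      simp only [assoc, hLs, comp_zero, hks] at e
      exact e.symm
    have hf0 : f = 0 := zero_of_comp_mono a' hf'
    rw [hf0, zero_comp] at hf
    have e := hf =≫ pullback.fst b b'
    simp only [assoc, hLf, zero_comp] at e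
    have : (π₀ ≫ t) ≫ S.ι = 0 := zero_of_comp_mono a (by simpa [assoc] using e)
    have : π₀ ≫ t = 0 := zero_of_comp_mono S.ι this
    rw [← cancel_epi π₀, this, comp_zero]
  -- epi
  haveI he : Epi (diffQ S a b a' b' h.comm h'.comm h.w2) := by
    have : Epi (cokernel.π kk ≫ diffQ S a b a' b' h.comm h'.comm h.w2) := by
      rw [hdQ]; infer_instance
    exact epi_of_epi (cokernel.π kk) _
  -- exactness in the middle
  have hex : (ShortComplex.mk (diffP S a b a' b' h.comm h'.comm h.w1)
      (diffQ S a b a' b' h.comm h'.comm h.w2)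
      (diff_w S a b a' b' h.comm h'.comm h.w1 h.w2)).Exact := by
    rw [ShortComplex.exact_iff_exact_up_to_refinements]
    intro A x hx
    dsimp at x hx
    obtain ⟨A₁, π₀, hπ₀, v, hv⟩ := surjective_up_to_refinements_of_epi (cokernel.π kk) x
    have hv1 : (v ≫ pullback.fst b b' ≫ b) ≫ S.ρ = 0 := by
      have e : v ≫ cokernel.π kk ≫ diffQ S a b a' b' h.comm h'.comm h.w2 =
          π₀ ≫ x ≫ diffQ S a b a' b' h.comm h'.comm h.w2 := by
        exact ((assoc v (cokernel.π kk) _).symm.trans (congrArg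
          (fun y => y ≫ diffQ S a b a' b' h.comm h'.comm h.w2) hv.symm)).trans (assoc _ _ _)
      rw [hdQ, hx, comp_zero] at e
      simpa [assoc] using e
    obtain ⟨A₂, π₁, hπ₁, r, hr⟩ :=
      S.seE.exact.exact_up_to_refinements (v ≫ pullback.fst b b' ≫ b) hv1
    have hr' : π₁ ≫ v ≫ pullback.fst b b' ≫ b = r ≫ S.κ := hr
    obtain ⟨A₃, π₂, hπ₂, f, hf⟩ := surjective_up_to_refinements_of_epi S.π r
    have hkfr : ∀ {Z : C} (g : W ⟶ Z), kk ≫ pullback.fst b b' ≫ g = a ≫ g :=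
      fun g => by rw [← Category.assoc, hkf]
    set v₁ : A₃ ⟶ pullback b b' := π₂ ≫ π₁ ≫ v - f ≫ kk with hv₁def
    have hv₁b : (v₁ ≫ pullback.fst b b') ≫ b = 0 := by
      rw [Category.assoc, hv₁def, Preadditive.sub_comp, sub_eq_zero]
      calc (π₂ ≫ π₁ ≫ v) ≫ pullback.fst b b' ≫ b
          = π₂ ≫ π₁ ≫ v ≫ pullback.fst b b' ≫ b := by simp only [Category.assoc]
        _ = π₂ ≫ r ≫ S.κ := by rw [hr']
        _ = (π₂ ≫ r) ≫ S.κ := by rw [Category.assoc]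
        _ = (f ≫ S.π) ≫ S.κ := by rw [hf]
        _ = f ≫ S.π ≫ S.κ := by rw [Category.assoc]
        _ = f ≫ a ≫ b := by rw [h.comm]
        _ = f ≫ kk ≫ pullback.fst b b' ≫ b := by rw [hkfr]
        _ = (f ≫ kk) ≫ pullback.fst b b' ≫ b := by simp only [Category.assoc]
    obtain ⟨A₄, π₃, hπ₃, p, hp⟩ :=
      h.se1.exact.exact_up_to_refinements (v₁ ≫ pullback.fst b b') hv₁b
    have hp2 : π₃ ≫ v₁ ≫ pullback.fst b b' = p ≫ S.ι ≫ a := hp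
    set v₂ : A₄ ⟶ pullback b b' := π₃ ≫ v₁ - p ≫ L with hv₂def
    have hv₂fst : v₂ ≫ pullback.fst b b' = 0 := by
      rw [hv₂def, Preadditive.sub_comp, sub_eq_zero, Category.assoc, hp2,
        Category.assoc, hLf]
    have hv₂b' : (v₂ ≫ pullback.snd b b') ≫ b' = 0 := by
      rw [Category.assoc, ← pullback.condition, ← Category.assoc, hv₂fst, zero_comp]
    obtain ⟨A₅, π₄, hπ₄, p', hp'⟩ :=
      h'.se1.exact.exact_up_to_refinements (v₂ ≫ pullback.snd b b') hv₂b'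
    have hp2' : π₄ ≫ v₂ ≫ pullback.snd b b' = p' ≫ S.ι ≫ a' := hp'
    set v₃ : A₅ ⟶ pullback b b' := π₄ ≫ v₂ - (p' ≫ S.ι) ≫ kk with hv₃def
    have hveq : v₃ = (-p') ≫ L := by
      apply pullback.hom_ext
      · simp only [hv₃def, Preadditive.sub_comp, Preadditive.neg_comp, Category.assoc,
          hv₂fst, comp_zero, zero_sub, hkf, hLf]
      · simp only [hv₃def, Preadditive.sub_comp, Preadditive.neg_comp, Category.assoc,
          hp2', hks, hLs, sub_self, comp_zero, neg_zero]
    refine ⟨A₅, π₄ ≫ π₃ ≫ π₂ ≫ π₁ ≫ π₀, inferInstance, π₄ ≫ p - p', ?_⟩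
    have key : v₃ ≫ cokernel.π kk = -(p' ≫ L ≫ cokernel.π kk) := by
      rw [hveq, Category.assoc, Preadditive.neg_comp]
    have e2 : (π₄ ≫ π₃ ≫ π₂ ≫ π₁ ≫ π₀) ≫ x =
        v₃ ≫ cokernel.π kk + (π₄ ≫ p) ≫ L ≫ cokernel.π kk := by
      simp only [hv₃def, hv₂def, hv₁def, Preadditive.sub_comp, Preadditive.add_comp,
        Preadditive.comp_sub, Preadditive.comp_add, Preadditive.neg_comp,
        Preadditive.comp_neg, Category.assoc, cokernel.condition, comp_zero, zero_comp,
        sub_zero, add_zero, zero_add, hv]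
      abel_nf
      exact congrArg (fun y => π₄ ≫ π₃ ≫ π₂ ≫ π₁ ≫ y) hv
    show (π₄ ≫ π₃ ≫ π₂ ≫ π₁ ≫ π₀) ≫ x = (π₄ ≫ p - p') ≫ L ≫ cokernel.π kk
    rw [e2, key, Preadditive.sub_comp]
    simp only [Preadditive.neg_comp, Category.assoc]
    abel
  exact { exact := hex }

end DiffSE

/-- The difference of two variegated extensions is a well-defined extension of `Q` by `P`:
the indicated morphisms `P ⟶ W′ − W` and `W′ − W ⟶ Q` exist (witnessed by the definitions
above), and `0 → P → (W′ − W) → Q → 0` is short exact (in particular `P ⟶ W′ − W`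
is a monomorphism). -/
theorem diff_is_extension (S : VarSetup C) (V V' : VarExt S) :
    (ShortComplex.mk
      (diffP S V.a V.b V'.a V'.b V.isVarExt.comm V'.isVarExt.comm V.isVarExt.w1)
      (diffQ S V.a V.b V'.a V'.b V.isVarExt.comm V'.isVarExt.comm V.isVarExt.w2)
      (diff_w S V.a V.b V'.a V'.b V.isVarExt.comm V'.isVarExt.comm V.isVarExt.w1
        V.isVarExt.w2)).ShortExact :=
  diff_shortExact S V.isVarExt V'.isVarExt
end

section
/- Two variegated extensions (W, a, b) and (W′, a′, b′) of 𝐄 by 𝐅 are isomorphic as variegated extensions if and only if their difference W′ − W is isomorphic, as an extension of Q by P, to the split extension 0 → P → P ⊕ Q → Q → 0. -/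
open CategoryTheory Category Limits

universe w v u

variable {C : Type u} [Category.{v} C] [Abelian C]

/-- Two extension data `(X, α, β)` and `(X′, α′, β′)` of `Q` by `P` are isomorphic:
there is an isomorphism of the middle objects commuting with the maps from `P` and to `Q`. -/
def ExtDataIso {P Q X X' : C} (α : P ⟶ X) (β : X ⟶ Q) (α' : P ⟶ X') (β' : X' ⟶ Q) : Prop :=
  ∃ e : X ≅ X', α ≫ e.hom = α' ∧ e.hom ≫ β' = β

/-- Two variegated extension data `(W, a, b)` and `(W′, a′, b′)` of `𝐄` by `𝐅` are
isomorphic as variegated extensions. -/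
def VarDataIso (S : VarSetup C) {W W' : C} (a : S.F ⟶ W) (b : W ⟶ S.E)
    (a' : S.F ⟶ W') (b' : W' ⟶ S.E) : Prop :=
  ∃ e : W ≅ W', a ≫ e.hom = a' ∧ e.hom ≫ b' = b

section Aux

/-- `(ι ≫ a, 0) : P ⟶ V'`. -/
noncomputable def kP (S : VarSetup C) {W W' : C} (a : S.F ⟶ W) (b : W ⟶ S.E)
    (a' : S.F ⟶ W') (b' : W' ⟶ S.E) (hV : IsVarExt S a b) (hV' : IsVarExt S a' b') : S.P ⟶ pullback b b' :=
  pullback.lift (S.ι ≫ a) 0 (by rw [hV.w1, zero_comp])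

/-- `(0, ι ≫ a') : P ⟶ V'`, the kernel of the first projection. -/
noncomputable def kP' (S : VarSetup C) {W W' : C} (a : S.F ⟶ W) (b : W ⟶ S.E)
    (a' : S.F ⟶ W') (b' : W' ⟶ S.E) (hV : IsVarExt S a b) (hV' : IsVarExt S a' b') : S.P ⟶ pullback b b' :=
  pullback.lift 0 (S.ι ≫ a') (by rw [hV'.w1, zero_comp])

lemma kP'_eq (S : VarSetup C) {W W' : C} (a : S.F ⟶ W) (b : W ⟶ S.E)
    (a' : S.F ⟶ W') (b' : W' ⟶ S.E) (hV : IsVarExt S a b) (hV' : IsVarExt S a' b') :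
    kP' S a b a' b' hV hV' =
      S.ι ≫ diffKer S a b a' b' hV.comm hV'.comm - kP S a b a' b' hV hV' := by
  apply pullback.hom_ext
  · simp [kP', kP, diffKer, pullback.lift_fst]
  · simp [kP', kP, diffKer, pullback.lift_snd]

lemma kP'_fst_zero (S : VarSetup C) {W W' : C} (a : S.F ⟶ W) (b : W ⟶ S.E)
    (a' : S.F ⟶ W') (b' : W' ⟶ S.E) (hV : IsVarExt S a b) (hV' : IsVarExt S a' b') : kP' S a b a' b' hV hV' ≫ pullback.fst b b' = 0 := by
  simp [kP', pullback.lift_fst]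

lemma mono_kP' (S : VarSetup C) {W W' : C} (a : S.F ⟶ W) (b : W ⟶ S.E)
    (a' : S.F ⟶ W') (b' : W' ⟶ S.E) (hV : IsVarExt S a b) (hV' : IsVarExt S a' b') : Mono (kP' S a b a' b' hV hV') := by
  have h : Mono (kP' S a b a' b' hV hV' ≫ pullback.snd b b') := by
    rw [show kP' S a b a' b' hV hV' ≫ pullback.snd b b' = S.ι ≫ a' from
      pullback.lift_snd _ _ _]
    exact hV'.se1.mono_f
  exact mono_of_mono _ (pullback.snd b b')

/-- `kP'` is a kernel of the first projection `V' ⟶ W`. -/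
noncomputable def kP'IsKernelFst (S : VarSetup C) {W W' : C} (a : S.F ⟶ W) (b : W ⟶ S.E)
    (a' : S.F ⟶ W') (b' : W' ⟶ S.E) (hV : IsVarExt S a b) (hV' : IsVarExt S a' b') :
    IsLimit (KernelFork.ofι (kP' S a b a' b' hV hV')
      (kP'_fst_zero S a b a' b' hV hV')) := by
  have : Mono (kP' S a b a' b' hV hV') := mono_kP' S a b a' b' hV hV'
  exact KernelFork.IsLimit.ofι' _ _ (fun {A} g hg => by
    have hg' : (g ≫ pullback.snd b b') ≫ b' = 0 := by
      rw [assoc, ← pullback.condition, ← assoc, hg, zero_comp]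
    obtain ⟨l, hl⟩ := KernelFork.IsLimit.lift' hV'.se1.fIsKernel _ hg'
    simp only [Fork.ι_ofι] at hl
    refine ⟨l, pullback.hom_ext ?_ ?_⟩
    · rw [assoc, kP'_fst_zero, comp_zero, hg]
    · rw [assoc, show kP' S a b a' b' hV hV' ≫ pullback.snd b b' = S.ι ≫ a' from
        pullback.lift_snd _ _ _, hl])

lemma seFst (S : VarSetup C) {W W' : C} (a : S.F ⟶ W) (b : W ⟶ S.E)
    (a' : S.F ⟶ W') (b' : W' ⟶ S.E) (hV : IsVarExt S a b) (hV' : IsVarExt S a' b') : (ShortComplex.mk (kP' S a b a' b' hV hV') (pullback.fst b b')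
    (kP'_fst_zero S a b a' b' hV hV')).ShortExact := by
  have : Epi b' := hV'.se1.epi_g
  exact
    { exact := ShortComplex.exact_of_f_is_kernel _ (kP'IsKernelFst S a b a' b' hV hV')
      mono_f := mono_kP' S a b a' b' hV hV'
      epi_g := inferInstance }

/-- The first projection `V' ⟶ W` is a cokernel of `kP'`. -/
noncomputable def fstIsCokernel (S : VarSetup C) {W W' : C} (a : S.F ⟶ W) (b : W ⟶ S.E)
    (a' : S.F ⟶ W') (b' : W' ⟶ S.E) (hV : IsVarExt S a b) (hV' : IsVarExt S a' b') :
    IsColimit (CokernelCofork.ofπ (pullback.fst b b')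
      (kP'_fst_zero S a b a' b' hV hV')) :=
  (seFst S a b a' b' hV hV').gIsCokernel

lemma mono_diffKer (S : VarSetup C) {W W' : C} (a : S.F ⟶ W) (b : W ⟶ S.E)
    (a' : S.F ⟶ W') (b' : W' ⟶ S.E) (hV : IsVarExt S a b) (hV' : IsVarExt S a' b') : Mono (diffKer S a b a' b' hV.comm hV'.comm) := by
  have h : Mono (diffKer S a b a' b' hV.comm hV'.comm ≫ pullback.fst b b') := by
    rw [show diffKer S a b a' b' hV.comm hV'.comm ≫ pullback.fst b b' = a from
      pullback.lift_fst _ _ _]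
    exact hV.se2.mono_f
  exact mono_of_mono _ (pullback.fst b b')

lemma seDiffKer (S : VarSetup C) {W W' : C} (a : S.F ⟶ W) (b : W ⟶ S.E)
    (a' : S.F ⟶ W') (b' : W' ⟶ S.E) (hV : IsVarExt S a b) (hV' : IsVarExt S a' b') : (ShortComplex.mk (diffKer S a b a' b' hV.comm hV'.comm)
    (cokernel.π _) (cokernel.condition _)).ShortExact :=
  { exact := ShortComplex.exact_of_g_is_cokernel _ (cokernelIsCokernel _)
    mono_f := mono_diffKer S a b a' b' hV hV'
    epi_g := inferInstance }

lemma diffP_eq (S : VarSetup C) {W W' : C} (a : S.F ⟶ W) (b : W ⟶ S.E)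
    (a' : S.F ⟶ W') (b' : W' ⟶ S.E) (hV : IsVarExt S a b) (hV' : IsVarExt S a' b') :
    diffP S a b a' b' hV.comm hV'.comm hV.w1 =
      kP S a b a' b' hV hV' ≫ cokernel.π (diffKer S a b a' b' hV.comm hV'.comm) := rfl

lemma mono_diffP (S : VarSetup C) {W W' : C} (a : S.F ⟶ W) (b : W ⟶ S.E)
    (a' : S.F ⟶ W') (b' : W' ⟶ S.E) (hV : IsVarExt S a b) (hV' : IsVarExt S a' b') : Mono (diffP S a b a' b' hV.comm hV'.comm hV.w1) := by
  apply Preadditive.mono_of_cancel_zero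
  intro T g hg
  dsimp only [diffW] at hg
  rw [diffP_eq S a b a' b' hV hV', ← assoc] at hg
  obtain ⟨h, hh⟩ := KernelFork.IsLimit.lift'
    (seDiffKer S a b a' b' hV hV').fIsKernel _ hg
  simp only [Fork.ι_ofι] at hh
  have hh2 : h ≫ diffKer S a b a' b' hV.comm hV'.comm ≫ pullback.snd b b' =
      (g ≫ kP S a b a' b' hV hV') ≫ pullback.snd b b' := by rw [← assoc, hh]
  rw [show diffKer S a b a' b' hV.comm hV'.comm ≫ pullback.snd b b' = a' from
    pullback.lift_snd _ _ _, assoc,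
    show kP S a b a' b' hV hV' ≫ pullback.snd b b' = 0 from pullback.lift_snd _ _ _,
    comp_zero] at hh2
  have : Mono a' := hV'.se2.mono_f
  have hzero : h = 0 := by rwa [← cancel_mono a', zero_comp]
  rw [hzero, zero_comp] at hh
  have hg2 : (g ≫ kP S a b a' b' hV hV') ≫ pullback.fst b b' = 0 := by
    rw [← hh, zero_comp]
  rw [assoc, show kP S a b a' b' hV hV' ≫ pullback.fst b b' = S.ι ≫ a from
    pullback.lift_fst _ _ _] at hg2
  have : Mono (S.ι ≫ a) := hV.se1.mono_f
  rwa [← cancel_mono (S.ι ≫ a), zero_comp]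

lemma epi_diffQ (S : VarSetup C) {W W' : C} (a : S.F ⟶ W) (b : W ⟶ S.E)
    (a' : S.F ⟶ W') (b' : W' ⟶ S.E) (hV : IsVarExt S a b) (hV' : IsVarExt S a' b') : Epi (diffQ S a b a' b' hV.comm hV'.comm hV.w2) := by
  have h1 : Epi (pullback.fst b b' ≫ b ≫ S.ρ) := by
    have : Epi b' := hV'.se1.epi_g
    have : Epi (b ≫ S.ρ) := hV.se2.epi_g
    exact epi_comp _ _
  have h2 : cokernel.π (diffKer S a b a' b' hV.comm hV'.comm) ≫
      diffQ S a b a' b' hV.comm hV'.comm hV.w2 = pullback.fst b b' ≫ b ≫ S.ρ :=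
    cokernel.π_desc _ _ _
  exact epi_of_epi_fac h2

/-- `diffQ` is a cokernel of `diffP`. -/
noncomputable def diffQIsCokernel (S : VarSetup C) {W W' : C} (a : S.F ⟶ W) (b : W ⟶ S.E)
    (a' : S.F ⟶ W') (b' : W' ⟶ S.E) (hV : IsVarExt S a b) (hV' : IsVarExt S a' b') :
    IsColimit (CokernelCofork.ofπ (diffQ S a b a' b' hV.comm hV'.comm hV.w2)
      (diff_w S a b a' b' hV.comm hV'.comm hV.w1 hV.w2)) := by
  have : Epi (diffQ S a b a' b' hV.comm hV'.comm hV.w2) := epi_diffQ S a b a' b' hV hV'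
  exact CokernelCofork.IsColimit.ofπ' _ _ (fun {A} t ht => by
    dsimp only [diffW] at t ht ⊢
    set u := cokernel.π (diffKer S a b a' b' hV.comm hV'.comm) ≫ t with hu
    have hk'u : kP' S a b a' b' hV hV' ≫ u = 0 := by
      rw [hu, ← assoc, kP'_eq S a b a' b' hV hV', Preadditive.sub_comp, assoc,
        cokernel.condition, comp_zero, zero_sub, Preadditive.neg_comp, neg_eq_zero,
        ← diffP_eq S a b a' b' hV hV']
      exact ht
    obtain ⟨v, hv⟩ := CokernelCofork.IsColimit.desc'
      (fstIsCokernel S a b a' b' hV hV') _ hk'u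
    simp only [Cofork.π_ofπ] at hv
    have hav : a ≫ v = 0 := by
      have := diffKer S a b a' b' hV.comm hV'.comm ≫= hv
      rw [← assoc, show diffKer S a b a' b' hV.comm hV'.comm ≫ pullback.fst b b' = a
        from pullback.lift_fst _ _ _, hu, ← assoc, cokernel.condition, zero_comp] at this
      exact this
    obtain ⟨s, hs⟩ := CokernelCofork.IsColimit.desc' hV.se2.gIsCokernel _ hav
    simp only [Cofork.π_ofπ] at hs
    refine ⟨s, ?_⟩
    erw [← cancel_epi (cokernel.π (diffKer S a b a' b' hV.comm hV'.comm)), ← assoc,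
      show cokernel.π (diffKer S a b a' b' hV.comm hV'.comm) ≫
        diffQ S a b a' b' hV.comm hV'.comm hV.w2 = pullback.fst b b' ≫ b ≫ S.ρ
        from cokernel.π_desc _ _ _, assoc, hs, hv, hu])

lemma seDiff (S : VarSetup C) {W W' : C} (a : S.F ⟶ W) (b : W ⟶ S.E)
    (a' : S.F ⟶ W') (b' : W' ⟶ S.E) (hV : IsVarExt S a b) (hV' : IsVarExt S a' b') : (ShortComplex.mk (diffP S a b a' b' hV.comm hV'.comm hV.w1)
    (diffQ S a b a' b' hV.comm hV'.comm hV.w2)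
    (diff_w S a b a' b' hV.comm hV'.comm hV.w1 hV.w2)).ShortExact :=
  { exact := ShortComplex.exact_of_g_is_cokernel _ (diffQIsCokernel S a b a' b' hV hV')
    mono_f := mono_diffP S a b a' b' hV hV'
    epi_g := epi_diffQ S a b a' b' hV hV' }

end Aux

/-- Two variegated extensions `(W, a, b)` and `(W′, a′, b′)` of `𝐄` by `𝐅` are isomorphic
as variegated extensions if and only if their difference `W′ − W` is isomorphic, as an
extension of `Q` by `P`, to the split extension `0 → P → P ⊕ Q → Q → 0`. -/
theorem varext_iso_iff_diff_split (S : VarSetup C) (V V' : VarExt S) :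
    VarDataIso S V.a V.b V'.a V'.b ↔
      ExtDataIso
        (diffP S V.a V.b V'.a V'.b V.isVarExt.comm V'.isVarExt.comm V.isVarExt.w1)
        (diffQ S V.a V.b V'.a V'.b V.isVarExt.comm V'.isVarExt.comm V.isVarExt.w2)
        (biprod.inl : S.P ⟶ S.P ⊞ S.Q) (biprod.snd : S.P ⊞ S.Q ⟶ S.Q) := by
  obtain ⟨W, a, b, hV⟩ := V
  obtain ⟨W', a', b', hV'⟩ := V'
  dsimp only at *
  have hmono' : Mono (S.ι ≫ a') := hV'.se1.mono_f
  constructor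
  · rintro ⟨e, he1, he2⟩
    -- the difference map `V' ⟶ W'` and its factorization through `P`
    have hs : (pullback.fst b b' ≫ e.hom - pullback.snd b b') ≫ b' = 0 := by
      rw [Preadditive.sub_comp, assoc, he2, pullback.condition, sub_self]
    obtain ⟨p, hp⟩ := KernelFork.IsLimit.lift' hV'.se1.fIsKernel _ hs
    simp only [Fork.ι_ofι] at hp
    have hds : diffKer S a b a' b' hV.comm hV'.comm ≫
        (pullback.fst b b' ≫ e.hom - pullback.snd b b') = 0 := by
      rw [Preadditive.comp_sub, ← assoc,
        show diffKer S a b a' b' hV.comm hV'.comm ≫ pullback.fst b b' = a from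
          pullback.lift_fst _ _ _,
        show diffKer S a b a' b' hV.comm hV'.comm ≫ pullback.snd b b' = a' from
          pullback.lift_snd _ _ _, he1, sub_self]
    have hdp : diffKer S a b a' b' hV.comm hV'.comm ≫ p = 0 := by
      rw [← cancel_mono (S.ι ≫ a'), assoc, hp, zero_comp, hds]
    set r : diffW S a b a' b' hV.comm hV'.comm ⟶ S.P := cokernel.desc _ p hdp with hr
    have hPr : diffP S a b a' b' hV.comm hV'.comm hV.w1 ≫ r = 𝟙 S.P := by
      erw [← cancel_mono (S.ι ≫ a'), diffP_eq S a b a' b' hV hV', assoc, assoc, hr,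
        cokernel.π_desc_assoc, hp, Preadditive.comp_sub, ← assoc,
        show kP S a b a' b' hV hV' ≫ pullback.fst b b' = S.ι ≫ a from
          pullback.lift_fst _ _ _,
        show kP S a b a' b' hV hV' ≫ pullback.snd b b' = 0 from
          pullback.lift_snd _ _ _, sub_zero, assoc, he1, id_comp]
    have hφ1 : diffP S a b a' b' hV.comm hV'.comm hV.w1 ≫
        biprod.lift r (diffQ S a b a' b' hV.comm hV'.comm hV.w2) = biprod.inl := by
      apply biprod.hom_ext
      · simp [hPr]
      · simpa using diff_w S a b a' b' hV.comm hV'.comm hV.w1 hV.w2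
    have hφ2 : biprod.lift r (diffQ S a b a' b' hV.comm hV'.comm hV.w2) ≫
        biprod.snd = diffQ S a b a' b' hV.comm hV'.comm hV.w2 := biprod.lift_snd _ _
    let ψ : (ShortComplex.mk (diffP S a b a' b' hV.comm hV'.comm hV.w1)
        (diffQ S a b a' b' hV.comm hV'.comm hV.w2)
        (diff_w S a b a' b' hV.comm hV'.comm hV.w1 hV.w2)) ⟶
        (ShortComplex.mk (biprod.inl : S.P ⟶ S.P ⊞ S.Q)
          (biprod.snd : S.P ⊞ S.Q ⟶ S.Q) (by simp)) :=
      { τ₁ := 𝟙 _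
        τ₂ := biprod.lift r (diffQ S a b a' b' hV.comm hV'.comm hV.w2)
        τ₃ := 𝟙 _
        comm₁₂ := by dsimp; rw [hφ1, id_comp]
        comm₂₃ := by dsimp; rw [hφ2, comp_id] }
    have h₂ : (ShortComplex.mk (biprod.inl : S.P ⟶ S.P ⊞ S.Q)
        (biprod.snd : S.P ⊞ S.Q ⟶ S.Q) (by simp)).ShortExact := by
      have spl := ShortComplex.Splitting.ofHasBinaryBiproduct (C := C) S.P S.Q
      exact { exact := spl.exact, mono_f := spl.mono_f, epi_g := spl.epi_g }
    have hiso : IsIso (biprod.lift r (diffQ S a b a' b' hV.comm hV'.comm hV.w2)) :=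
      ShortComplex.isIso₂_of_shortExact_of_isIso₁₃' ψ
        (seDiff S a b a' b' hV hV') h₂
        (by dsimp [ψ]; infer_instance) (by dsimp [ψ]; infer_instance)
    exact ⟨asIso (biprod.lift r (diffQ S a b a' b' hV.comm hV'.comm hV.w2)), hφ1, hφ2⟩
  · rintro ⟨e, he1, he2⟩
    set r : diffW S a b a' b' hV.comm hV'.comm ⟶ S.P := e.hom ≫ biprod.fst with hr
    have hPr : diffP S a b a' b' hV.comm hV'.comm hV.w1 ≫ r = 𝟙 S.P := by
      rw [hr, ← assoc, he1, biprod.inl_fst]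
    have hkpi : kP' S a b a' b' hV hV' ≫ cokernel.π (diffKer S a b a' b' hV.comm hV'.comm)
        = -(diffP S a b a' b' hV.comm hV'.comm hV.w1) := by
      rw [kP'_eq S a b a' b' hV hV', Preadditive.sub_comp, assoc, cokernel.condition,
        comp_zero, zero_sub, diffP_eq S a b a' b' hV hV']
      rfl
    have hkt : kP' S a b a' b' hV hV' ≫ (pullback.snd b b' +
        (cokernel.π (diffKer S a b a' b' hV.comm hV'.comm) ≫ r) ≫ (S.ι ≫ a')) = 0 := by
      simp only [Preadditive.comp_add, ← assoc, hkpi, Preadditive.neg_comp, hPr, id_comp]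
      erw [← assoc (kP' S a b a' b' hV hV'), hkpi, Preadditive.neg_comp, hPr]
      simp only [Preadditive.neg_comp, id_comp, assoc]
      rw [show kP' S a b a' b' hV hV' ≫ pullback.snd b b' = S.ι ≫ a' from
        pullback.lift_snd _ _ _]
      exact add_neg_cancel _
    obtain ⟨m, hm⟩ := CokernelCofork.IsColimit.desc'
      (fstIsCokernel S a b a' b' hV hV') _ hkt
    simp only [Cofork.π_ofπ] at hm
    have ham : a ≫ m = a' := by
      have h := diffKer S a b a' b' hV.comm hV'.comm ≫= hm
      rw [← assoc, show diffKer S a b a' b' hV.comm hV'.comm ≫ pullback.fst b b' = a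
        from pullback.lift_fst _ _ _] at h
      rw [h, Preadditive.comp_add,
        show diffKer S a b a' b' hV.comm hV'.comm ≫ pullback.snd b b' = a' from
          pullback.lift_snd _ _ _]
      simp only [← assoc]
      erw [← assoc (diffKer S a b a' b' hV.comm hV'.comm), cokernel.condition]
      erw [zero_comp]
      simp
    have hepi : Epi (pullback.fst b b') := (seFst S a b a' b' hV hV').epi_g
    have hbm : m ≫ b' = b := by
      rw [← cancel_epi (pullback.fst b b'), ← assoc, hm, Preadditive.add_comp]
      simp only [assoc, hV'.comm, reassoc_of% S.wF, zero_comp, comp_zero, add_zero]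
      exact pullback.condition.symm
    let ψ : (ShortComplex.mk (S.ι ≫ a) b hV.w1) ⟶ (ShortComplex.mk (S.ι ≫ a') b' hV'.w1) :=
      { τ₁ := 𝟙 _
        τ₂ := m
        τ₃ := 𝟙 _
        comm₁₂ := by dsimp; rw [id_comp, assoc, ham]
        comm₂₃ := by dsimp; rw [hbm, comp_id] }
    have hiso : IsIso m :=
      ShortComplex.isIso₂_of_shortExact_of_isIso₁₃' ψ hV.se1 hV'.se1
        (by dsimp [ψ]; infer_instance) (by dsimp [ψ]; infer_instance)
    exact ⟨asIso m, ham, hbm⟩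
end
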